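/- The Kac–Wakimoto Hypothesis holds: for every i ∈ I, α ∈ J_i, and β ∈ KW, letting j ∈ I be determined by M^j = a_{β⊗1}, the number s_{ij} · conj(ṡ_{αβ}) is real and nonnegative. -/

import Mathlib

open scoped BigOperators Classical

/-- The combinatorial data of the categorical coset setting: pseudo-unitary modular
tensor categories `C1`, `C2`, a regular commutative algebra `A` in the Deligne product
`C1 ⊗ C2`, the modular tensor category `C = (C1 ⊗ C2)_A^0` of local `A`-modules and the
fusion category `(C1 ⊗ C2)_A` of all `A`-modules, encoded through their (finitely many)
simple objects, fusion multiplicities, categorical ( = Frobenius–Perron) dimensions,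
restriction multiplicities, normalized S-matrices, twists and double-braiding data.
`I`, `J`, `K`, `V` index the simple objects of `C`, `C1`, `C2`, `(C1 ⊗ C2)_A`
respectively; `M^1 = A`, `W^1 = 1_{C1}`, `N^1 = 1_{C2}`; `res v α φ` is the multiplicity
of `W^α ⊗ N^φ` in the restriction of the simple `A`-module `v` to `C1 ⊗ C2`; `ι` embeds
the simple local `A`-modules `M^i` into the simple `A`-modules.  The assumptions
`M^{(1,1)} = 1_{C2}` and `dim Hom_{C2}(1_{C2}, M^{(1,α)}) = δ_{1,α}` are the fields
`res_one` and `res_unit`. -/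
structure CosetSetting where
  I : Type
  J : Type
  K : Type
  V : Type
  [fintI : Fintype I]
  [fintJ : Fintype J]
  [fintK : Fintype K]
  [fintV : Fintype V]
  [deqI : DecidableEq I]
  [deqJ : DecidableEq J]
  [deqK : DecidableEq K]
  [deqV : DecidableEq V]
  oneI : I
  oneJ : J
  oneK : K
  N1 : J → J → J → ℕ
  N2 : K → K → K → ℕ
  NC : I → I → I → ℕ
  NV : V → V → V → ℕ
  dual1 : J → J
  dual2 : K → K
  dualI : I → I
  dJ : J → ℝ
  dK : K → ℝ
  dI : I → ℝ
  res : V → J → K → ℕ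
  ι : I → V
  s1 : J → J → ℂ
  s2 : K → K → ℂ
  sC : I → I → ℂ
  θ1 : J → ℂ
  θ2 : K → ℂ
  θC : I → ℂ
  centralizes : J → J → Prop
  ι_inj : Function.Injective ι
  dJ_pos : ∀ α, 0 < dJ α
  dK_pos : ∀ φ, 0 < dK φ
  dI_pos : ∀ i, 0 < dI i
  dJ_one : dJ oneJ = 1
  dK_one : dK oneK = 1
  dI_one : dI oneI = 1
  N1_comm : ∀ α β γ, N1 α β γ = N1 β α γ
  N1_one : ∀ α β, N1 oneJ α β = if α = β then 1 else 0
  N1_dual : ∀ α β, N1 α β oneJ = if β = dual1 α then 1 else 0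
  N1_assoc : ∀ α β γ δ, (∑ ε, N1 α β ε * N1 ε γ δ) = ∑ ε, N1 β γ ε * N1 α ε δ
  N1_dim : ∀ α β, dJ α * dJ β = ∑ γ, (N1 α β γ : ℝ) * dJ γ
  N2_comm : ∀ φ ψ χ, N2 φ ψ χ = N2 ψ φ χ
  N2_one : ∀ φ ψ, N2 oneK φ ψ = if φ = ψ then 1 else 0
  N2_dual : ∀ φ ψ, N2 φ ψ oneK = if ψ = dual2 φ then 1 else 0
  N2_dim : ∀ φ ψ, dK φ * dK ψ = ∑ χ, (N2 φ ψ χ : ℝ) * dK χ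
  NC_comm : ∀ i j k, NC i j k = NC j i k
  NC_one : ∀ i j, NC oneI i j = if i = j then 1 else 0
  NC_dual : ∀ i j, NC i j oneI = if j = dualI i then 1 else 0
  NC_dim : ∀ i j, dI i * dI j = ∑ k, (NC i j k : ℝ) * dI k
  NV_one : ∀ v w, NV (ι oneI) v w = if v = w then 1 else 0
  NV_local : ∀ i j k, NV (ι i) (ι j) (ι k) = NC i j k
  NV_local_only : ∀ i j v, (∀ k, ι k ≠ v) → NV (ι i) (ι j) v = 0
  res_one : ∀ φ, res (ι oneI) oneJ φ = if φ = oneK then 1 else 0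
  res_unit : ∀ α, res (ι oneI) α oneK = if α = oneJ then 1 else 0
  free_hom : ∀ α β φ ψ v,
      (∑ w, ∑ u, res w α φ * res u β ψ * NV w u v)
        = ∑ γ, ∑ χ, N1 α β γ * N2 φ ψ χ * res v γ χ
  s_res : ∀ i α φ,
      (∑ j, sC i j * (res (ι j) α φ : ℂ))
        = ∑ β, ∑ ψ, (res (ι i) β ψ : ℂ) * s1 β α * s2 ψ φ
  s1_symm : ∀ α β, s1 α β = s1 β α
  s1_unitary : ∀ α β, (∑ γ, s1 α γ * (starRingEnd ℂ) (s1 β γ)) = if α = β then 1 else 0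
  s1_one : ∀ α, s1 oneJ α = (dJ α : ℂ) * s1 oneJ oneJ
  s1_one_real : (s1 oneJ oneJ).im = 0
  s1_one_pos : 0 < (s1 oneJ oneJ).re
  s2_symm : ∀ φ ψ, s2 φ ψ = s2 ψ φ
  s2_unitary : ∀ φ ψ, (∑ χ, s2 φ χ * (starRingEnd ℂ) (s2 ψ χ)) = if φ = ψ then 1 else 0
  s2_one : ∀ φ, s2 oneK φ = (dK φ : ℂ) * s2 oneK oneK
  s2_one_real : (s2 oneK oneK).im = 0
  s2_one_pos : 0 < (s2 oneK oneK).re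
  sC_symm : ∀ i j, sC i j = sC j i
  sC_unitary : ∀ i j, (∑ k, sC i k * (starRingEnd ℂ) (sC j k)) = if i = j then 1 else 0
  sC_one : ∀ i, sC oneI i = (dI i : ℂ) * sC oneI oneI
  sC_one_real : (sC oneI oneI).im = 0
  sC_one_pos : 0 < (sC oneI oneI).re
  θ1_one : θ1 oneJ = 1
  θ2_one : θ2 oneK = 1
  θC_one : θC oneI = 1
  centralizes_iff : ∀ α β,
      centralizes α β ↔ s1 α β = ((dJ α * dJ β : ℝ) : ℂ) * s1 oneJ oneJ

namespace CosetSetting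

attribute [instance] fintI fintJ fintK fintV deqI deqJ deqK deqV

variable (S : CosetSetting)

/-- the multiplicity function of `M^{(i,α)}`, as an object of `C2` -/
def m (i : S.I) (α : S.J) : S.K → ℕ := S.res (S.ι i) α

/-- `J_i = {α ∈ J : M^{(i,α)} ≠ 0}` -/
def Ji (i : S.I) : Set S.J := {α | ∃ φ, S.m i α φ ≠ 0}

/-- `J_1` -/
def J1 : Set S.J := S.Ji S.oneI

/-- `a_{α⊗1} = A ⊠ (W^α ⊗ 1_{C2})` as an object (multiplicity function) of `(C1 ⊗ C2)_A`;
its multiplicities are given by Frobenius reciprocity. -/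
def aL (α : S.J) : S.V → ℕ := fun v => S.res v α S.oneK

/-- `a_{1⊗N^φ} = A ⊠ (1_{C1} ⊗ N^φ)` -/
def aRs (φ : S.K) : S.V → ℕ := fun v => S.res v S.oneJ φ

/-- `a_{1⊗X} = A ⊠ (1_{C1} ⊗ X)` for an object `X` of `C2` -/
def aR (X : S.K → ℕ) : S.V → ℕ := fun v => ∑ φ, X φ * S.res v S.oneJ φ

/-- `M^i` viewed as a (simple) object of `(C1 ⊗ C2)_A` -/
def Mobj (i : S.I) : S.V → ℕ := fun v => if v = S.ι i then 1 else 0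

/-- tensor product `⊠_A` of objects of `(C1 ⊗ C2)_A` -/
def tA (X Y : S.V → ℕ) : S.V → ℕ := fun v => ∑ w, ∑ u, X w * Y u * S.NV w u v

/-- `⟨X,Y⟩ = dim Hom` in `(C1 ⊗ C2)_A` -/
def homA (X Y : S.V → ℕ) : ℕ := ∑ v, X v * Y v

/-- tensor product of objects of `C2` -/
def t2 (X Y : S.K → ℕ) : S.K → ℕ := fun χ => ∑ φ, ∑ ψ, X φ * Y ψ * S.N2 φ ψ χ

/-- `⟨X,Y⟩ = dim Hom` in `C2` -/
def hom2 (X Y : S.K → ℕ) : ℕ := ∑ φ, X φ * Y φ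

/-- categorical dimension of an object of `C2` -/
def dim2 (X : S.K → ℕ) : ℝ := ∑ φ, (X φ : ℝ) * S.dK φ

/-- the Kac–Wakimoto set: those `α ∈ J` for which the `A`-module `a_{α⊗1}` is local,
i.e. all of its simple summands are local (hence of the form `M^i`). -/
def KW : Set S.J := {α | ∀ v, S.aL α v ≠ 0 → ∃ i, S.ι i = v}

/-- `X` is a direct summand of `Y` in `(C1 ⊗ C2)_A` -/
def summand (X Y : S.V → ℕ) : Prop := ∀ v, X v ≤ Y v

end CosetSetting

namespace KW18

open Finset Complex

variable (S : CosetSetting)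

noncomputable def a1 : ℝ := (S.s1 S.oneJ S.oneJ).re
noncomputable def a2 : ℝ := (S.s2 S.oneK S.oneK).re
noncomputable def aC : ℝ := (S.sC S.oneI S.oneI).re

lemma a1_pos : 0 < a1 S := S.s1_one_pos
lemma a2_pos : 0 < a2 S := S.s2_one_pos
lemma aC_pos : 0 < aC S := S.sC_one_pos

lemma s1_11 : S.s1 S.oneJ S.oneJ = (a1 S : ℂ) :=
  Complex.ext (by simp [a1]) (by simp [S.s1_one_real])
lemma s2_11 : S.s2 S.oneK S.oneK = (a2 S : ℂ) :=
  Complex.ext (by simp [a2]) (by simp [S.s2_one_real])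
lemma sC_11 : S.sC S.oneI S.oneI = (aC S : ℂ) :=
  Complex.ext (by simp [aC]) (by simp [S.sC_one_real])

lemma s1_one' (γ : S.J) : S.s1 γ S.oneJ = ((S.dJ γ * a1 S : ℝ) : ℂ) := by
  rw [S.s1_symm, S.s1_one, s1_11]; push_cast; ring
lemma s2_one' (ψ : S.K) : S.s2 ψ S.oneK = ((S.dK ψ * a2 S : ℝ) : ℂ) := by
  rw [S.s2_symm, S.s2_one, s2_11]; push_cast; ring
lemma sC_one' (i : S.I) : S.sC i S.oneI = ((S.dI i * aC S : ℝ) : ℂ) := by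
  rw [S.sC_symm, S.sC_one, sC_11]; push_cast; ring

lemma t_one : S.res (S.ι S.oneI) S.oneJ S.oneK = 1 := by
  rw [S.res_one]; simp

/-- Vacuum uniqueness: the unit object `W¹ ⊗ N¹` appears only in `M¹ = A`. -/
lemma vac_unique (i : S.I) (hi : i ≠ S.oneI) : S.res (S.ι i) S.oneJ S.oneK = 0 := by
  by_contra h
  set t : S.V → ℕ := fun v => S.res v S.oneJ S.oneK with ht
  have tone : t (S.ι S.oneI) = 1 := t_one S
  set Sw : S.V → S.V → ℕ := fun w v => ∑ u, t u * S.NV w u v with hSw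
  have key : ∀ v, (∑ w, t w * Sw w v) = t v := by
    intro v
    have fh := S.free_hom S.oneJ S.oneJ S.oneK S.oneK v
    have rhs : (∑ γ, ∑ χ, S.N1 S.oneJ S.oneJ γ * S.N2 S.oneK S.oneK χ * S.res v γ χ) = t v := by
      rw [Finset.sum_eq_single S.oneJ]
      · rw [Finset.sum_eq_single S.oneK]
        · simp [S.N1_one, S.N2_one, ht]
        · intro χ _ hχ; simp [S.N2_one, Ne.symm hχ]
        · simp
      · intro γ _ hγ
        apply Finset.sum_eq_zero; intro χ _
        simp [S.N1_one, Ne.symm hγ]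
      · simp
    rw [← rhs, ← fh]
    apply Finset.sum_congr rfl; intro w _
    rw [hSw, Finset.mul_sum]
    apply Finset.sum_congr rfl; intro u _; ring
  have split : ∀ v, Sw (S.ι S.oneI) v = t v := by
    intro v
    calc Sw (S.ι S.oneI) v = ∑ u, t u * (if u = v then 1 else 0) := by
          apply Finset.sum_congr rfl; intro u _; rw [S.NV_one]
      _ = t v := by simp
  have rest : ∀ v, (∑ w ∈ Finset.univ.erase (S.ι S.oneI), t w * Sw w v) = 0 := by
    intro v
    have h2 := Finset.sum_erase_add Finset.univ (fun w => t w * Sw w v)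
      (Finset.mem_univ (S.ι S.oneI))
    rw [key v, split v, tone, one_mul] at h2
    omega
  have hSi : ∀ v, Sw (S.ι i) v = 0 := by
    intro v
    have h3 := rest v
    rw [Finset.sum_eq_zero_iff] at h3
    have hmem : S.ι i ∈ Finset.univ.erase (S.ι S.oneI) := by
      refine Finset.mem_erase.2 ⟨?_, Finset.mem_univ _⟩
      exact fun hc => hi (S.ι_inj hc)
    have h4 := h3 _ hmem
    have ht0 : t (S.ι i) ≠ 0 := h
    rcases Nat.mul_eq_zero.1 h4 with h5 | h5
    · exact absurd h5 ht0
    · exact h5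
  -- contradiction: NV (ι i) (ι oneI) (ι i) = NC oneI i i = 1
  have h6 := hSi (S.ι i)
  rw [hSw] at h6
  simp only at h6
  rw [Finset.sum_eq_zero_iff] at h6
  have h7 := h6 (S.ι S.oneI) (Finset.mem_univ _)
  rw [tone, one_mul, S.NV_local, S.NC_comm, S.NC_one] at h7
  simp at h7

/-- `T(i,γ) = dim₂ M^{(i,γ)}` -/
noncomputable def Tw (i : S.I) (γ : S.J) : ℝ := ∑ ψ, (S.res (S.ι i) γ ψ : ℝ) * S.dK ψ

lemma Tw_nonneg (i : S.I) (γ : S.J) : 0 ≤ Tw S i γ :=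
  Finset.sum_nonneg fun ψ _ => mul_nonneg (Nat.cast_nonneg _) (le_of_lt (S.dK_pos ψ))

/-- `dimr i = dim of the restriction of M^i` -/
noncomputable def dr (i : S.I) : ℝ := ∑ γ, Tw S i γ * S.dJ γ

lemma dr_nonneg (i : S.I) : 0 ≤ dr S i :=
  Finset.sum_nonneg fun γ _ => mul_nonneg (Tw_nonneg S i γ) (le_of_lt (S.dJ_pos γ))

noncomputable def Gm (γ γ' : S.J) : ℝ := ∑ i, Tw S i γ * Tw S i γ'

lemma Gm_nonneg (γ γ' : S.J) : 0 ≤ Gm S γ γ' :=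
  Finset.sum_nonneg fun i _ => mul_nonneg (Tw_nonneg S i γ) (Tw_nonneg S i γ')

lemma Gm_comm (γ γ' : S.J) : Gm S γ γ' = Gm S γ' γ :=
  Finset.sum_congr rfl fun i _ => mul_comm _ _

/-- Step 1 -/
lemma step1 (β : S.J) (j : S.I) (haL : S.aL β = S.Mobj j) (i : S.I) :
    S.sC i j = (a2 S : ℂ) * ∑ γ, ((Tw S i γ : ℝ) : ℂ) * S.s1 γ β := by
  have sr := S.s_res i β S.oneK
  have lhs : (∑ k, S.sC i k * (S.res (S.ι k) β S.oneK : ℂ)) = S.sC i j := by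
    have e : ∀ k, (S.res (S.ι k) β S.oneK : ℂ) = if k = j then 1 else 0 := by
      intro k
      have h := congrFun haL (S.ι k)
      simp only [CosetSetting.aL, CosetSetting.Mobj] at h
      rw [h]
      by_cases hk : k = j
      · simp [hk]
      · have : S.ι k ≠ S.ι j := fun hc => hk (S.ι_inj hc)
        simp [this, hk]
    calc (∑ k, S.sC i k * (S.res (S.ι k) β S.oneK : ℂ))
        = ∑ k, S.sC i k * (if k = j then 1 else 0) := by
          apply Finset.sum_congr rfl; intro k _; rw [e k]
      _ = S.sC i j := by simp
  rw [lhs] at sr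
  rw [sr]
  rw [Finset.mul_sum]
  apply Finset.sum_congr rfl; intro γ _
  have e2 : ∀ ψ, S.s2 ψ S.oneK = ((S.dK ψ * a2 S : ℝ) : ℂ) := s2_one' S
  calc (∑ ψ, (S.res (S.ι i) γ ψ : ℂ) * S.s1 γ β * S.s2 ψ S.oneK)
      = ∑ ψ, ((S.res (S.ι i) γ ψ * S.dK ψ * a2 S : ℝ) : ℂ) * S.s1 γ β := by
        apply Finset.sum_congr rfl; intro ψ _
        rw [e2 ψ]; push_cast; ring
    _ = ((Tw S i γ * a2 S : ℝ) : ℂ) * S.s1 γ β := by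
        rw [← Finset.sum_mul]
        congr 1
        rw [Tw]; push_cast
        rw [Finset.sum_mul]
    _ = (a2 S : ℂ) * (((Tw S i γ : ℝ)) : ℂ) * S.s1 γ β := by push_cast; ring
    _ = (a2 S : ℂ) * ((((Tw S i γ : ℝ)) : ℂ) * S.s1 γ β) := by ring

/-- F3: `a1 a2 dr i = dI i aC` -/
lemma F3 (i : S.I) : a1 S * a2 S * dr S i = S.dI i * aC S := by
  have sr := S.s_res i S.oneJ S.oneK
  have lhs : (∑ k, S.sC i k * (S.res (S.ι k) S.oneJ S.oneK : ℂ))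
      = ((S.dI i * aC S : ℝ) : ℂ) := by
    rw [Finset.sum_eq_single S.oneI]
    · simp [t_one, sC_one']
    · intro k _ hk; rw [vac_unique S k hk]; simp
    · simp
  rw [lhs] at sr
  have rhs : (∑ γ, ∑ ψ, (S.res (S.ι i) γ ψ : ℂ) * S.s1 γ S.oneJ * S.s2 ψ S.oneK)
      = ((a1 S * a2 S * dr S i : ℝ) : ℂ) := by
    calc (∑ γ, ∑ ψ, (S.res (S.ι i) γ ψ : ℂ) * S.s1 γ S.oneJ * S.s2 ψ S.oneK)
        = ∑ γ, ∑ ψ, ((a1 S * a2 S * ((S.res (S.ι i) γ ψ : ℝ) * S.dK ψ * S.dJ γ) : ℝ) : ℂ) := by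
          apply Finset.sum_congr rfl; intro γ _
          apply Finset.sum_congr rfl; intro ψ _
          rw [s1_one', s2_one']; push_cast; ring
      _ = ((∑ γ, ∑ ψ, a1 S * a2 S * ((S.res (S.ι i) γ ψ : ℝ) * S.dK ψ * S.dJ γ) : ℝ) : ℂ) := by
          push_cast; rfl
      _ = ((a1 S * a2 S * dr S i : ℝ) : ℂ) := by
          congr 1
          rw [dr, Finset.mul_sum]
          apply Finset.sum_congr rfl; intro γ _
          rw [Tw, Finset.sum_mul, Finset.mul_sum]
          try (apply Finset.sum_congr rfl; intro ψ _; ring)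
  rw [rhs] at sr
  exact_mod_cast sr.symm

lemma swap_lemma {A B C : Type} [Fintype A] [Fintype B] [Fintype C]
    (W : A → ℂ) (F : B → C → ℂ) (s : C → A → ℂ) :
    (∑ ψ, W ψ * ∑ b, ∑ c, F b c * s c ψ) = ∑ b, ∑ c, F b c * (∑ ψ, s c ψ * W ψ) := by
  calc (∑ ψ, W ψ * ∑ b, ∑ c, F b c * s c ψ)
      = ∑ ψ, ∑ b, ∑ c, W ψ * (F b c * s c ψ) := by
        apply Finset.sum_congr rfl; intro ψ _
        rw [Finset.mul_sum]; apply Finset.sum_congr rfl; intro b _; rw [Finset.mul_sum]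
    _ = ∑ b, ∑ ψ, ∑ c, W ψ * (F b c * s c ψ) := Finset.sum_comm
    _ = ∑ b, ∑ c, ∑ ψ, W ψ * (F b c * s c ψ) := by
        apply Finset.sum_congr rfl; intro b _; exact Finset.sum_comm
    _ = ∑ b, ∑ c, F b c * (∑ ψ, s c ψ * W ψ) := by
        apply Finset.sum_congr rfl; intro b _
        apply Finset.sum_congr rfl; intro c _
        rw [Finset.mul_sum]; apply Finset.sum_congr rfl; intro ψ _; ring

lemma sC_one1 (k : S.I) : S.sC S.oneI k = ((S.dI k * aC S : ℝ) : ℂ) := by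
  rw [S.sC_one, sC_11]; push_cast; ring

lemma s1_one1 (γ : S.J) : S.s1 S.oneJ γ = ((S.dJ γ * a1 S : ℝ) : ℂ) := by
  rw [S.s1_one, s1_11]; push_cast; ring

/-- F4 -/
lemma F4 (γ : S.J) :
    a2 S * aC S * (∑ k, S.dI k * Tw S k γ) = S.dJ γ * a1 S := by
  have key : (∑ ψ, ((S.dK ψ * a2 S : ℝ) : ℂ) * ∑ k, S.sC S.oneI k * (S.res (S.ι k) γ ψ : ℂ))
      = ∑ ψ, ((S.dK ψ * a2 S : ℝ) : ℂ) *
          ∑ γ', ∑ ψ', (S.res (S.ι S.oneI) γ' ψ' : ℂ) * S.s1 γ' γ * S.s2 ψ' ψ := by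
    apply Finset.sum_congr rfl; intro ψ _; rw [S.s_res]
  have inner : ∀ ψ' : S.K, (∑ ψ, S.s2 ψ' ψ * ((S.dK ψ * a2 S : ℝ) : ℂ))
      = if ψ' = S.oneK then 1 else 0 := by
    intro ψ'
    have : ∀ ψ : S.K, ((S.dK ψ * a2 S : ℝ) : ℂ) = (starRingEnd ℂ) (S.s2 S.oneK ψ) := by
      intro ψ
      rw [S.s2_symm, s2_one']
      rw [Complex.conj_ofReal]
    calc (∑ ψ, S.s2 ψ' ψ * ((S.dK ψ * a2 S : ℝ) : ℂ))
        = ∑ ψ, S.s2 ψ' ψ * (starRingEnd ℂ) (S.s2 S.oneK ψ) := by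
          apply Finset.sum_congr rfl; intro ψ _; rw [this ψ]
      _ = if ψ' = S.oneK then 1 else 0 := S.s2_unitary ψ' S.oneK
  have rhs : (∑ ψ, ((S.dK ψ * a2 S : ℝ) : ℂ) *
        ∑ γ', ∑ ψ', (S.res (S.ι S.oneI) γ' ψ' : ℂ) * S.s1 γ' γ * S.s2 ψ' ψ)
      = ((S.dJ γ * a1 S : ℝ) : ℂ) := by
    rw [swap_lemma (fun ψ => ((S.dK ψ * a2 S : ℝ) : ℂ))
        (fun γ' ψ' => (S.res (S.ι S.oneI) γ' ψ' : ℂ) * S.s1 γ' γ) (fun ψ' ψ => S.s2 ψ' ψ)]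
    calc (∑ γ', ∑ ψ', ((S.res (S.ι S.oneI) γ' ψ' : ℂ) * S.s1 γ' γ) *
            (∑ ψ, S.s2 ψ' ψ * ((S.dK ψ * a2 S : ℝ) : ℂ)))
        = ∑ γ', ∑ ψ', ((S.res (S.ι S.oneI) γ' ψ' : ℂ) * S.s1 γ' γ) *
            (if ψ' = S.oneK then 1 else 0) := by
          apply Finset.sum_congr rfl; intro γ' _
          apply Finset.sum_congr rfl; intro ψ' _
          rw [inner ψ']
      _ = ∑ γ', (S.res (S.ι S.oneI) γ' S.oneK : ℂ) * S.s1 γ' γ := by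
          apply Finset.sum_congr rfl; intro γ' _
          simp
      _ = ∑ γ', (if γ' = S.oneJ then 1 else 0 : ℂ) * S.s1 γ' γ := by
          apply Finset.sum_congr rfl; intro γ' _
          rw [S.res_unit]
          split_ifs <;> simp
      _ = S.s1 S.oneJ γ := by simp
      _ = ((S.dJ γ * a1 S : ℝ) : ℂ) := s1_one1 S γ
  have lhs : (∑ ψ, ((S.dK ψ * a2 S : ℝ) : ℂ) * ∑ k, S.sC S.oneI k * (S.res (S.ι k) γ ψ : ℂ))
      = ((a2 S * aC S * (∑ k, S.dI k * Tw S k γ) : ℝ) : ℂ) := by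
    calc (∑ ψ, ((S.dK ψ * a2 S : ℝ) : ℂ) * ∑ k, S.sC S.oneI k * (S.res (S.ι k) γ ψ : ℂ))
        = ∑ ψ, ∑ k, ((S.dK ψ * a2 S * (S.dI k * aC S) * S.res (S.ι k) γ ψ : ℝ) : ℂ) := by
          apply Finset.sum_congr rfl; intro ψ _
          rw [Finset.mul_sum]
          apply Finset.sum_congr rfl; intro k _
          rw [sC_one1]; push_cast; ring
      _ = ((∑ ψ, ∑ k, S.dK ψ * a2 S * (S.dI k * aC S) * S.res (S.ι k) γ ψ : ℝ) : ℂ) := by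
          push_cast; rfl
      _ = ((a2 S * aC S * (∑ k, S.dI k * Tw S k γ) : ℝ) : ℂ) := by
          congr 1
          rw [Finset.sum_comm, Finset.mul_sum]
          apply Finset.sum_congr rfl; intro k _
          rw [Tw, Finset.mul_sum, Finset.mul_sum]
          apply Finset.sum_congr rfl; intro ψ _; ring
  rw [lhs, rhs] at key
  exact_mod_cast key

/-- F5: `dJ` is an eigenvector of `Gm` -/
lemma F5 (γ : S.J) : a2 S ^ 2 * (∑ γ', Gm S γ γ' * S.dJ γ') = S.dJ γ := by
  have e1 : (∑ γ', Gm S γ γ' * S.dJ γ') = ∑ i, Tw S i γ * dr S i := by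
    calc (∑ γ', Gm S γ γ' * S.dJ γ')
        = ∑ γ', ∑ i, Tw S i γ * (Tw S i γ' * S.dJ γ') := by
          apply Finset.sum_congr rfl; intro γ' _
          rw [Gm, Finset.sum_mul]
          apply Finset.sum_congr rfl; intro i _; ring
      _ = ∑ i, ∑ γ', Tw S i γ * (Tw S i γ' * S.dJ γ') := Finset.sum_comm
      _ = ∑ i, Tw S i γ * dr S i := by
          apply Finset.sum_congr rfl; intro i _
          rw [dr, Finset.mul_sum]
  have ha1 : a1 S ≠ 0 := ne_of_gt (a1_pos S)
  have haC : aC S ≠ 0 := ne_of_gt (aC_pos S)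
  -- a1 * aC * (a2^2 * Σ) = a1 * aC * dJ γ
  apply mul_left_cancel₀ (mul_ne_zero ha1 haC)
  have e2 : ∀ i, a1 S * a2 S * dr S i = S.dI i * aC S := F3 S
  calc a1 S * aC S * (a2 S ^ 2 * (∑ γ', Gm S γ γ' * S.dJ γ'))
      = a2 S * aC S * (∑ i, Tw S i γ * (a1 S * a2 S * dr S i)) := by
        rw [e1]
        simp only [Finset.mul_sum]
        apply Finset.sum_congr rfl; intro i _; ring
    _ = a2 S * aC S * (∑ i, Tw S i γ * (S.dI i * aC S)) := by
        congr 1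
        apply Finset.sum_congr rfl; intro i _
        rw [e2 i]
    _ = aC S * (a2 S * aC S * (∑ i, S.dI i * Tw S i γ)) := by
        simp only [Finset.mul_sum]
        apply Finset.sum_congr rfl; intro i _; ring
    _ = aC S * (S.dJ γ * a1 S) := by rw [F4]
    _ = a1 S * aC S * S.dJ γ := by ring

lemma norm_x (β : S.J) : (∑ γ, Complex.normSq (S.s1 γ β)) = 1 := by
  have u := S.s1_unitary β β
  rw [if_pos rfl] at u
  have e : (∑ γ, (Complex.normSq (S.s1 γ β) : ℂ)) = 1 := by
    rw [← u]
    apply Finset.sum_congr rfl; intro γ _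
    rw [Complex.mul_conj, S.s1_symm β γ]
  exact_mod_cast e

lemma norm_sCcol (j : S.I) : (∑ i, Complex.normSq (S.sC i j)) = 1 := by
  have u := S.sC_unitary j j
  rw [if_pos rfl] at u
  have e : (∑ k, (Complex.normSq (S.sC k j) : ℂ)) = 1 := by
    rw [← u]
    apply Finset.sum_congr rfl; intro k _
    rw [Complex.mul_conj, S.sC_symm j k]
  exact_mod_cast e

noncomputable def hvec (β : S.J) (i : S.I) : ℂ := ∑ γ, ((Tw S i γ : ℝ) : ℂ) * S.s1 γ β

lemma step1' (β : S.J) (j : S.I) (haL : S.aL β = S.Mobj j) (i : S.I) :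
    S.sC i j = (a2 S : ℂ) * hvec S β i := step1 S β j haL i

lemma F7 (β : S.J) (j : S.I) (haL : S.aL β = S.Mobj j) :
    a2 S ^ 2 * (∑ i, Complex.normSq (hvec S β i)) = 1 := by
  have e : ∀ i : S.I, a2 S ^ 2 * Complex.normSq (hvec S β i) = Complex.normSq (S.sC i j) := by
    intro i
    rw [step1' S β j haL i, Complex.normSq_mul, Complex.normSq_ofReal]
    ring
  calc a2 S ^ 2 * (∑ i, Complex.normSq (hvec S β i))
      = ∑ i, Complex.normSq (S.sC i j) := by
        rw [Finset.mul_sum]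
        apply Finset.sum_congr rfl; intro k _; rw [e k]
    _ = 1 := norm_sCcol S j

/-- the quadratic form of `Gm` diagonalizes through the rows -/
lemma quad (z : S.J → ℂ) :
    (∑ γ, ∑ γ', ((Gm S γ γ' : ℝ) : ℂ) * (z γ * (starRingEnd ℂ) (z γ')))
      = ∑ i, ((∑ γ, ((Tw S i γ : ℝ) : ℂ) * z γ) *
          (starRingEnd ℂ) (∑ γ, ((Tw S i γ : ℝ) : ℂ) * z γ)) := by
  have conj_sum : ∀ i : S.I, (starRingEnd ℂ) (∑ γ, ((Tw S i γ : ℝ) : ℂ) * z γ)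
      = ∑ γ, ((Tw S i γ : ℝ) : ℂ) * (starRingEnd ℂ) (z γ) := by
    intro i
    rw [map_sum]
    apply Finset.sum_congr rfl; intro γ _
    rw [map_mul, Complex.conj_ofReal]
  calc (∑ γ, ∑ γ', ((Gm S γ γ' : ℝ) : ℂ) * (z γ * (starRingEnd ℂ) (z γ')))
      = ∑ γ, ∑ γ', ∑ i, (((Tw S i γ : ℝ) : ℂ) * z γ) * (((Tw S i γ' : ℝ) : ℂ) * (starRingEnd ℂ) (z γ')) := by
        apply Finset.sum_congr rfl; intro γ _
        apply Finset.sum_congr rfl; intro γ' _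
        have hg : ((Gm S γ γ' : ℝ) : ℂ) = ∑ i, ((Tw S i γ : ℝ) : ℂ) * ((Tw S i γ' : ℝ) : ℂ) := by
          rw [Gm]; push_cast; rfl
        rw [hg, Finset.sum_mul]
        apply Finset.sum_congr rfl; intro k _; ring
    _ = ∑ γ, ∑ i, ∑ γ', (((Tw S i γ : ℝ) : ℂ) * z γ) * (((Tw S i γ' : ℝ) : ℂ) * (starRingEnd ℂ) (z γ')) := by
        apply Finset.sum_congr rfl; intro γ _
        exact Finset.sum_comm
    _ = ∑ i, ∑ γ, ∑ γ', (((Tw S i γ : ℝ) : ℂ) * z γ) * (((Tw S i γ' : ℝ) : ℂ) * (starRingEnd ℂ) (z γ')) :=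
        Finset.sum_comm
    _ = ∑ i, ((∑ γ, ((Tw S i γ : ℝ) : ℂ) * z γ) *
          (starRingEnd ℂ) (∑ γ, ((Tw S i γ : ℝ) : ℂ) * z γ)) := by
        apply Finset.sum_congr rfl; intro i _
        rw [conj_sum i, Finset.sum_mul_sum]

noncomputable def yv (β γ : S.J) : ℂ := (((S.dJ γ)⁻¹ : ℝ) : ℂ) * S.s1 γ β

lemma x_eq (β γ : S.J) : S.s1 γ β = ((S.dJ γ : ℝ) : ℂ) * yv S β γ := by
  rw [yv, ← mul_assoc, ← Complex.ofReal_mul,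
    mul_inv_cancel₀ (ne_of_gt (S.dJ_pos γ))]
  simp

lemma DA (β : S.J) :
    a2 S ^ 2 * (∑ γ, ∑ γ', (Gm S γ γ' * S.dJ γ * S.dJ γ') * Complex.normSq (yv S β γ)) = 1 := by
  have per : ∀ γ : S.J, (∑ γ', (Gm S γ γ' * S.dJ γ * S.dJ γ') * Complex.normSq (yv S β γ))
      = (S.dJ γ * Complex.normSq (yv S β γ)) * (∑ γ', Gm S γ γ' * S.dJ γ') := by
    intro γ; rw [Finset.mul_sum]
    apply Finset.sum_congr rfl; intro γ' _; ring
  calc a2 S ^ 2 * (∑ γ, ∑ γ', (Gm S γ γ' * S.dJ γ * S.dJ γ') * Complex.normSq (yv S β γ))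
      = ∑ γ, (S.dJ γ * Complex.normSq (yv S β γ)) * (a2 S ^ 2 * (∑ γ', Gm S γ γ' * S.dJ γ')) := by
        rw [Finset.mul_sum]
        apply Finset.sum_congr rfl; intro γ _
        rw [per γ]; ring
    _ = ∑ γ, (S.dJ γ * Complex.normSq (yv S β γ)) * S.dJ γ := by
        apply Finset.sum_congr rfl; intro γ _
        rw [F5]
    _ = ∑ γ, Complex.normSq (S.s1 γ β) := by
        apply Finset.sum_congr rfl; intro γ _
        rw [x_eq S β γ, Complex.normSq_mul, Complex.normSq_ofReal]; ring
    _ = 1 := norm_x S β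

lemma DB (β : S.J) :
    a2 S ^ 2 * (∑ γ, ∑ γ', (Gm S γ γ' * S.dJ γ * S.dJ γ') * Complex.normSq (yv S β γ')) = 1 := by
  have swap : (∑ γ, ∑ γ', (Gm S γ γ' * S.dJ γ * S.dJ γ') * Complex.normSq (yv S β γ'))
      = ∑ γ, ∑ γ', (Gm S γ γ' * S.dJ γ * S.dJ γ') * Complex.normSq (yv S β γ) := by
    calc (∑ γ, ∑ γ', (Gm S γ γ' * S.dJ γ * S.dJ γ') * Complex.normSq (yv S β γ'))
        = ∑ γ', ∑ γ, (Gm S γ γ' * S.dJ γ * S.dJ γ') * Complex.normSq (yv S β γ') :=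
          Finset.sum_comm
      _ = ∑ γ, ∑ γ', (Gm S γ γ' * S.dJ γ * S.dJ γ') * Complex.normSq (yv S β γ) := by
          apply Finset.sum_congr rfl; intro a _
          apply Finset.sum_congr rfl; intro b _
          rw [Gm_comm S b a]; ring
  rw [swap]; exact DA S β

lemma DC (β : S.J) (j : S.I) (haL : S.aL β = S.Mobj j) :
    a2 S ^ 2 * (∑ γ, ∑ γ', (Gm S γ γ' * S.dJ γ * S.dJ γ') *
      (yv S β γ * (starRingEnd ℂ) (yv S β γ')).re) = 1 := by
  have cplx : (∑ γ, ∑ γ', ((Gm S γ γ' * S.dJ γ * S.dJ γ' : ℝ) : ℂ) *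
        (yv S β γ * (starRingEnd ℂ) (yv S β γ')))
      = ((∑ i, Complex.normSq (hvec S β i) : ℝ) : ℂ) := by
    calc (∑ γ, ∑ γ', ((Gm S γ γ' * S.dJ γ * S.dJ γ' : ℝ) : ℂ) *
          (yv S β γ * (starRingEnd ℂ) (yv S β γ')))
        = ∑ γ, ∑ γ', ((Gm S γ γ' : ℝ) : ℂ) *
            (S.s1 γ β * (starRingEnd ℂ) (S.s1 γ' β)) := by
          apply Finset.sum_congr rfl; intro γ _
          apply Finset.sum_congr rfl; intro γ' _
          rw [x_eq S β γ, x_eq S β γ', map_mul, Complex.conj_ofReal]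
          push_cast; ring
      _ = ∑ i, hvec S β i * (starRingEnd ℂ) (hvec S β i) := quad S fun γ => S.s1 γ β
      _ = ∑ i, ((Complex.normSq (hvec S β i) : ℝ) : ℂ) := by
          apply Finset.sum_congr rfl; intro i _
          rw [Complex.mul_conj]
      _ = ((∑ i, Complex.normSq (hvec S β i) : ℝ) : ℂ) := by push_cast; rfl
  have re_eq : (∑ γ, ∑ γ', (Gm S γ γ' * S.dJ γ * S.dJ γ') *
        (yv S β γ * (starRingEnd ℂ) (yv S β γ')).re)
      = ∑ i, Complex.normSq (hvec S β i) := by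
    have h := congrArg Complex.re cplx
    rw [Complex.ofReal_re] at h
    rw [← h, Complex.re_sum]
    apply Finset.sum_congr rfl; intro γ _
    rw [Complex.re_sum]
    apply Finset.sum_congr rfl; intro γ' _
    rw [Complex.re_ofReal_mul]
  rw [re_eq]
  exact F7 S β j haL

/-- the Dirichlet energy vanishes -/
lemma dirichlet (β : S.J) (j : S.I) (haL : S.aL β = S.Mobj j) :
    (∑ γ, ∑ γ', (Gm S γ γ' * S.dJ γ * S.dJ γ') *
      Complex.normSq (yv S β γ - yv S β γ')) = 0 := by
  have expand : (∑ γ, ∑ γ', (Gm S γ γ' * S.dJ γ * S.dJ γ') *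
        Complex.normSq (yv S β γ - yv S β γ'))
      = (∑ γ, ∑ γ', (Gm S γ γ' * S.dJ γ * S.dJ γ') * Complex.normSq (yv S β γ))
        + (∑ γ, ∑ γ', (Gm S γ γ' * S.dJ γ * S.dJ γ') * Complex.normSq (yv S β γ'))
        - 2 * (∑ γ, ∑ γ', (Gm S γ γ' * S.dJ γ * S.dJ γ') *
            (yv S β γ * (starRingEnd ℂ) (yv S β γ')).re) := by
    rw [Finset.mul_sum, ← Finset.sum_add_distrib, ← Finset.sum_sub_distrib]
    apply Finset.sum_congr rfl; intro γ _
    rw [Finset.mul_sum, ← Finset.sum_add_distrib, ← Finset.sum_sub_distrib]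
    apply Finset.sum_congr rfl; intro γ' _
    rw [Complex.normSq_sub]; ring
  have h2 : a2 S ^ 2 * (∑ γ, ∑ γ', (Gm S γ γ' * S.dJ γ * S.dJ γ') *
      Complex.normSq (yv S β γ - yv S β γ')) = 0 := by
    rw [expand, mul_sub, mul_add, DA S β, DB S β]
    rw [show a2 S ^ 2 * (2 * (∑ γ, ∑ γ', (Gm S γ γ' * S.dJ γ * S.dJ γ') *
        (yv S β γ * (starRingEnd ℂ) (yv S β γ')).re))
      = 2 * (a2 S ^ 2 * (∑ γ, ∑ γ', (Gm S γ γ' * S.dJ γ * S.dJ γ') *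
        (yv S β γ * (starRingEnd ℂ) (yv S β γ')).re)) from by ring]
    rw [DC S β j haL]
    ring
  have ha2 : a2 S ^ 2 ≠ 0 := pow_ne_zero _ (ne_of_gt (a2_pos S))
  exact (mul_eq_zero.1 h2).resolve_left ha2

/-- alignment along edges of the support graph -/
lemma align (β : S.J) (j : S.I) (haL : S.aL β = S.Mobj j) (γ γ' : S.J)
    (hg : 0 < Gm S γ γ') : yv S β γ = yv S β γ' := by
  have E := dirichlet S β j haL
  have nn : ∀ g ∈ (Finset.univ : Finset S.J),
      0 ≤ ∑ g', (Gm S g g' * S.dJ g * S.dJ g') * Complex.normSq (yv S β g - yv S β g') := by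
    intro g _
    apply Finset.sum_nonneg; intro g' _
    apply mul_nonneg _ (Complex.normSq_nonneg _)
    exact mul_nonneg (mul_nonneg (Gm_nonneg S g g') (le_of_lt (S.dJ_pos g)))
      (le_of_lt (S.dJ_pos g'))
  rw [Finset.sum_eq_zero_iff_of_nonneg nn] at E
  have E2 := E γ (Finset.mem_univ _)
  have nn2 : ∀ g' ∈ (Finset.univ : Finset S.J),
      0 ≤ (Gm S γ g' * S.dJ γ * S.dJ g') * Complex.normSq (yv S β γ - yv S β g') := by
    intro g' _
    apply mul_nonneg _ (Complex.normSq_nonneg _)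
    exact mul_nonneg (mul_nonneg (Gm_nonneg S γ g') (le_of_lt (S.dJ_pos γ)))
      (le_of_lt (S.dJ_pos g'))
  rw [Finset.sum_eq_zero_iff_of_nonneg nn2] at E2
  have E3 := E2 γ' (Finset.mem_univ _)
  have hpos : 0 < Gm S γ γ' * S.dJ γ * S.dJ γ' :=
    mul_pos (mul_pos hg (S.dJ_pos γ)) (S.dJ_pos γ')
  have hz : Complex.normSq (yv S β γ - yv S β γ') = 0 :=
    (mul_eq_zero.1 E3).resolve_left (ne_of_gt hpos)
  have := Complex.normSq_eq_zero.1 hz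
  exact sub_eq_zero.1 this

end KW18


/-- Theorem 7.2, the Kac–Wakimoto Hypothesis: for every `i ∈ I`,
`α ∈ J_i` and `β ∈ KW`, letting `j ∈ I` be determined by `M^j = a_{β⊗1}`, the number
`s_{ij} · conj(ṡ_{αβ})` is real and nonnegative. -/
theorem statement_18 (S : CosetSetting) :
    ∀ i : S.I, ∀ α ∈ S.Ji i, ∀ β ∈ S.KW, ∀ j : S.I, S.aL β = S.Mobj j →
      ∃ r : ℝ, 0 ≤ r ∧ S.sC i j * (starRingEnd ℂ) (S.s1 α β) = (r : ℂ) := by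
  intro i α hα β _ j haL
  obtain ⟨ψ₀, hψ₀⟩ := hα
  have hres : S.res (S.ι i) α ψ₀ ≠ 0 := hψ₀
  have hTα : 0 < KW18.Tw S i α := by
    apply Finset.sum_pos'
    · intro ψ _
      exact mul_nonneg (Nat.cast_nonneg _) (le_of_lt (S.dK_pos ψ))
    · refine ⟨ψ₀, Finset.mem_univ _, ?_⟩
      apply mul_pos _ (S.dK_pos ψ₀)
      exact_mod_cast Nat.pos_of_ne_zero hres
  have halign : ∀ γ : S.J, KW18.Tw S i γ ≠ 0 → KW18.yv S β γ = KW18.yv S β α := by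
    intro γ hγ
    apply KW18.align S β j haL
    have hTγ : 0 < KW18.Tw S i γ :=
      lt_of_le_of_ne (KW18.Tw_nonneg S i γ) (Ne.symm hγ)
    have hle : KW18.Tw S i γ * KW18.Tw S i α ≤ KW18.Gm S γ α := by
      apply Finset.single_le_sum (f := fun k => KW18.Tw S k γ * KW18.Tw S k α)
        (fun k _ => mul_nonneg (KW18.Tw_nonneg S k γ) (KW18.Tw_nonneg S k α))
        (Finset.mem_univ i)
    exact lt_of_lt_of_le (mul_pos hTγ hTα) hle
  have hh : KW18.hvec S β i = ((KW18.dr S i : ℝ) : ℂ) * KW18.yv S β α := by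
    rw [KW18.hvec, KW18.dr]
    push_cast
    rw [Finset.sum_mul]
    apply Finset.sum_congr rfl; intro γ _
    by_cases hγ : KW18.Tw S i γ = 0
    · simp [hγ]
    · rw [KW18.x_eq S β γ, halign γ hγ]; push_cast; ring
  refine ⟨KW18.a2 S * KW18.dr S i * ((S.dJ α)⁻¹ * Complex.normSq (S.s1 α β)), ?_, ?_⟩
  · apply mul_nonneg
    · exact mul_nonneg (le_of_lt (KW18.a2_pos S)) (KW18.dr_nonneg S i)
    · exact mul_nonneg (le_of_lt (inv_pos.2 (S.dJ_pos α))) (Complex.normSq_nonneg _)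
  · calc S.sC i j * (starRingEnd ℂ) (S.s1 α β)
        = (KW18.a2 S : ℂ) * ((KW18.dr S i : ℝ) : ℂ) * ((((S.dJ α)⁻¹ : ℝ)) : ℂ) *
            (S.s1 α β * (starRingEnd ℂ) (S.s1 α β)) := by
          rw [KW18.step1' S β j haL i, hh, KW18.yv]; ring
      _ = ((KW18.a2 S * KW18.dr S i * ((S.dJ α)⁻¹ * Complex.normSq (S.s1 α β)) : ℝ) : ℂ) := by
          rw [Complex.mul_conj]; push_cast; ring
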